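/- Let k, n, m be natural numbers. Write C^{n∗}_{r} for the set of tuples x : Fin n → Fin (r+1) satisfying condition (∗) for the parameter k (for every i with i+1 < n, if (x(i+1):ℕ) < k then x(i) ≤ x(i+1)), viewed as a subposet of the pointwise order. Define β : C^{n∗}_{k+m+1} → (Fin (n+1) → Fin (k+m+2)) by prepending a 0 coordinate, β(z) = (0, z₁, ..., zₙ), and γ : C^{(n+1)∗}_{k+m} → (Fin (n+1) → Fin (k+m+2)) by adding 1 to every coordinate, γ(y) = (y₁+1, ..., y_{n+1}+1), where for γ the condition (∗) on the source is taken with parameter k and on the target with parameter k+1 (and for β with parameter k+1 on the target). Then: (1) β and γ land in C^{(n+1)∗}_{k+m+1} (tuples satisfying (∗) with parameter k+1); (2) β and γ are order-reflecting monotone maps; (3) the image of β is down-closed in C^{(n+1)∗}_{k+m+1}; (4) the images of β and γ are disjoint and their union is all of C^{(n+1)∗}_{k+m+1}; (5) for z in C^{n∗}_{k+m+1} and y in C^{(n+1)∗}_{k+m}, one has β(z) ≤ γ(y) if and only if there exists x in C^{n∗}_{k+m} (condition (∗) with parameter k) with z(i) ≤ x(i)+1 for all i and (0, x₁, ..., xₙ)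 ≤ y pointwise. -/
import Mathlib


/-- Condition (∗) with parameter `k` on a tuple `x : Fin n → Fin (s+1)`:
for each `i` with `i+1 < n`, if `(x (i+1) : ℕ) < k` then `x i ≤ x (i+1)`. -/
def StarCond (k : ℕ) {n s : ℕ} (x : Fin n → Fin (s + 1)) : Prop :=
  ∀ (i : ℕ) (h : i + 1 < n), ((x ⟨i + 1, h⟩ : ℕ) < k) →
    x ⟨i, Nat.lt_of_succ_lt h⟩ ≤ x ⟨i + 1, h⟩

/-- Prepending a `0` coordinate: `(z₁, …, zₙ) ↦ (0, z₁, …, zₙ)`. -/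
def prependZero {n s : ℕ} (z : Fin n → Fin (s + 1)) : Fin (n + 1) → Fin (s + 1) :=
  Fin.cons 0 z

/-- Adding `1` to every coordinate: `(y₁, …, yₙ) ↦ (y₁+1, …, yₙ+1)`. -/
def addOne {n s : ℕ} (y : Fin n → Fin (s + 1)) : Fin n → Fin (s + 2) :=
  fun i => Fin.succ (y i)

lemma tail_star {c n s : ℕ} (w : Fin (n + 1) → Fin (s + 1)) (hw : StarCond c w) :
    StarCond c (fun i => w i.succ) := by
  intro i h hlt
  exact hw (i + 1) (Nat.succ_lt_succ h) hlt

lemma prependZero_succ {n s : ℕ} (z : Fin n → Fin (s + 1)) (i : Fin n) :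
    prependZero z i.succ = z i := Fin.cons_succ _ _ _

lemma prependZero_zero {n s : ℕ} (z : Fin n → Fin (s + 1)) :
    prependZero z 0 = 0 := rfl

/-- The square formed by `β : C^{n∗}_{k+m+1} → C^{(n+1)∗}_{k+m+1}` (prepend `0`) and
`γ : C^{(n+1)∗}_{k+m} → C^{(n+1)∗}_{k+m+1}` (add `1` to every coordinate) is a lax pushout:
(1) both maps land in the (∗)-subposet with parameter `k+1`; (2) both are monotone and
order-reflecting; (3) the image of `β` is down-closed; (4) the images are disjoint and
cover; (5) `β z ≤ γ y` iff there is `x ∈ C^{n∗}_{k+m}` with `z ≤ x + 1` pointwise and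
`(0, x) ≤ y` pointwise. -/
theorem stmt_9 (k n m : ℕ) :
    -- (1) well-definedness of β and γ
    (∀ z : Fin n → Fin (k + m + 2), StarCond (k + 1) z →
        StarCond (k + 1) (prependZero z)) ∧
    (∀ y : Fin (n + 1) → Fin (k + m + 1), StarCond k y →
        StarCond (k + 1) (addOne y)) ∧
    -- (2) β and γ are monotone and order-reflecting
    (∀ z z' : Fin n → Fin (k + m + 2), StarCond (k + 1) z → StarCond (k + 1) z' →
        (z ≤ z' ↔ prependZero z ≤ prependZero z')) ∧
    (∀ y y' : Fin (n + 1) → Fin (k + m + 1), StarCond k y → StarCond k y' →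
        (y ≤ y' ↔ addOne y ≤ addOne y')) ∧
    -- (3) the image of β is down-closed in C^{(n+1)∗}_{k+m+1}
    (∀ z : Fin n → Fin (k + m + 2), StarCond (k + 1) z →
        ∀ w : Fin (n + 1) → Fin (k + m + 2), StarCond (k + 1) w →
          w ≤ prependZero z →
          ∃ z' : Fin n → Fin (k + m + 2), StarCond (k + 1) z' ∧ w = prependZero z') ∧
    -- (4) the images of β and γ are disjoint and their union is everything
    (∀ (z : Fin n → Fin (k + m + 2)) (y : Fin (n + 1) → Fin (k + m + 1)),
        StarCond (k + 1) z → StarCond k y → prependZero z ≠ addOne y) ∧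
    (∀ w : Fin (n + 1) → Fin (k + m + 2), StarCond (k + 1) w →
        (∃ z : Fin n → Fin (k + m + 2), StarCond (k + 1) z ∧ w = prependZero z) ∨
        (∃ y : Fin (n + 1) → Fin (k + m + 1), StarCond k y ∧ w = addOne y)) ∧
    -- (5) the lax pushout comparison condition
    (∀ (z : Fin n → Fin (k + m + 2)) (y : Fin (n + 1) → Fin (k + m + 1)),
        StarCond (k + 1) z → StarCond k y →
        (prependZero z ≤ addOne y ↔
          ∃ x : Fin n → Fin (k + m + 1), StarCond k x ∧
            (∀ i, (z i : ℕ) ≤ (x i : ℕ) + 1) ∧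
            prependZero x ≤ y)) := by
  
  refine ⟨?_, ?_, ?_, ?_, ?_, ?_, ?_, ?_⟩
  · -- (1a)
    intro z hz i h hlt
    match i with
    | 0 =>
      show prependZero z 0 ≤ _
      rw [prependZero_zero]
      exact Fin.zero_le _
    | (j + 1) =>
      have h' : j + 1 < n := Nat.lt_of_succ_lt_succ h
      exact hz j h' hlt
  · -- (1b)
    intro y hy i h hlt
    simp only [addOne, Fin.val_succ] at hlt ⊢
    have := hy i h (by omega)
    exact Fin.succ_le_succ_iff.mpr this
  · -- (2β)
    intro z z' _ _
    constructor
    · intro h j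
      cases j using Fin.cases with
      | zero => rw [prependZero_zero]; exact Fin.zero_le _
      | succ i => rw [prependZero_succ, prependZero_succ]; exact h i
    · intro h i
      have := h i.succ
      rwa [prependZero_succ, prependZero_succ] at this
  · -- (2γ)
    intro y y' _ _
    constructor
    · intro h i
      exact Fin.succ_le_succ_iff.mpr (h i)
    · intro h i
      exact Fin.succ_le_succ_iff.mp (h i)
  · -- (3)
    intro z hz w hw hle
    refine ⟨fun i => w i.succ, tail_star w hw, ?_⟩
    funext j
    cases j using Fin.cases with
    | zero =>
      have : w 0 ≤ prependZero z 0 := hle 0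
      rw [prependZero_zero] at this
      rw [prependZero_zero]
      exact Fin.le_zero_iff.mp this
    | succ i => rw [prependZero_succ]
  · -- (4 disjoint)
    intro z y _ _ heq
    have : prependZero z 0 = addOne y 0 := congrFun heq 0
    rw [prependZero_zero] at this
    exact (Fin.succ_ne_zero (y 0)) this.symm
  · -- (4 cover)
    intro w hw
    by_cases h0 : w 0 = 0
    · left
      refine ⟨fun i => w i.succ, tail_star w hw, ?_⟩
      funext j
      cases j using Fin.cases with
      | zero => rw [prependZero_zero]; exact h0
      | succ i => rw [prependZero_succ]
    · right
      have hall : ∀ j (hj : j < n + 1), 1 ≤ (w ⟨j, hj⟩ : ℕ) := by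
        intro j
        induction j with
        | zero =>
          intro hj
          have : w ⟨0, hj⟩ = w 0 := rfl
          rw [this]
          exact Nat.one_le_iff_ne_zero.mpr (fun hc => h0 (Fin.ext hc))
        | succ i ih =>
          intro hj
          by_contra hc
          push_neg at hc
          have hz : (w ⟨i + 1, hj⟩ : ℕ) = 0 := by omega
          have := hw i hj (by omega)
          have h2 := ih (Nat.lt_of_succ_lt hj)
          rw [Fin.le_def] at this
          omega
      refine ⟨fun i => ⟨(w i : ℕ) - 1, by
          have h1 := (w i).isLt
          have h2 := hall i.val i.isLt
          simp only [Fin.eta] at h2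
          omega⟩, ?_, ?_⟩
      · intro i h hlt
        have h2 := hall (i + 1) h
        have h3 := hall i (Nat.lt_of_succ_lt h)
        simp only [Fin.eta] at hlt h2 h3 ⊢
        have := hw i h (by omega)
        rw [Fin.le_def] at this
        rw [Fin.le_def]
        simp only
        omega
      · funext i
        apply Fin.ext
        simp only [addOne, Fin.val_succ, Fin.eta]
        have h2 := hall i.val i.isLt
        simp only [Fin.eta] at h2
        omega
  · -- (5)
    intro z y hz hy
    constructor
    · intro h
      refine ⟨fun i => y i.succ, tail_star y hy, ?_, ?_⟩
      · intro i
        have := h i.succ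
        rw [prependZero_succ] at this
        rw [Fin.le_def] at this
        simpa [addOne] using this
      · intro j
        cases j using Fin.cases with
        | zero => rw [prependZero_zero]; exact Fin.zero_le _
        | succ i => rw [prependZero_succ]
    · rintro ⟨x, hx, hzx, hxy⟩
      intro j
      cases j using Fin.cases with
      | zero => rw [prependZero_zero]; exact Fin.zero_le _
      | succ i =>
        rw [prependZero_succ]
        have h1 := hzx i
        have h2 := hxy i.succ
        rw [prependZero_succ] at h2
        rw [Fin.le_def] at h2 ⊢
        simp only [addOne, Fin.val_succ]
        omega
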